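/- (Compact-interval integration step) Let f : [−1,1] → ℝ be C¹ and a > 0, with κ_a as defined. Then ∫_{−1}^{1} ∂_z(f(z)·κ_a(z,x)) dz, computed as the sum of integrals over (−1,x) and (x,1), equals (1/a)·[ B_a(x)·f(1) + f(x) − B_a(−x)·f(−1) ], where B_a(x) = cosh((1+x)/a)/sinh(2/a). -/

import Mathlib

open MeasureTheory

lemma ftc_piece (a : ℝ) (ha : 0 < a)
    (f : ℝ → ℝ) (hf : ContDiffOn ℝ 1 f (Set.Icc (-1) 1))
    (c d : ℝ) (hc : -1 ≤ c) (hcd : c < d) (hd : d ≤ 1)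
    (C : ℝ) (G : ℝ → ℝ)
    (hG : ∀ z ∈ Set.Ioo c d, G =ᶠ[nhds z] fun w => f w * (C * Real.exp (w / a))) :
    ∫ z in Set.Ioo c d, deriv G z
      = f d * (C * Real.exp (d / a)) - f c * (C * Real.exp (c / a)) := by
  set F : ℝ → ℝ := fun w => f w * (C * Real.exp (w / a)) with hF
  set h : ℝ → ℝ := fun z =>
    derivWithin f (Set.Icc (-1 : ℝ) 1) z * (C * Real.exp (z / a))
      + f z * (C * Real.exp (z / a) * (1 / a)) with hh
  have hsub : Set.Icc c d ⊆ Set.Icc (-1 : ℝ) 1 := Set.Icc_subset_Icc hc hd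
  have hFderiv : ∀ z ∈ Set.Ioo c d, HasDerivAt F (h z) z := by
    intro z hz
    have hznh : Set.Icc (-1 : ℝ) 1 ∈ nhds z := by
      apply Icc_mem_nhds <;> [linarith [hz.1]; linarith [hz.2]]
    have hdf : DifferentiableAt ℝ f z :=
      ((hf.differentiableOn one_ne_zero) z (hsub (Set.Ioo_subset_Icc_self hz))).differentiableAt hznh
    have h1 : HasDerivAt f (derivWithin f (Set.Icc (-1 : ℝ) 1) z) z := by
      rw [derivWithin_of_mem_nhds hznh]; exact hdf.hasDerivAt
    have h2 : HasDerivAt (fun w => C * Real.exp (w / a)) (C * Real.exp (z / a) * (1 / a)) z := by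
      have := (((hasDerivAt_id z).div_const a).exp).const_mul C
      simpa [mul_comm, mul_assoc, mul_left_comm] using this
    have h3 : HasDerivAt (fun w => f w * (C * Real.exp (w / a))) _ z := h1.mul h2
    simpa [hF, hh, mul_comm, mul_assoc, mul_left_comm] using h3
  have hcongr : ∀ z ∈ Set.Ioo c d, deriv G z = h z := by
    intro z hz
    rw [Filter.EventuallyEq.deriv_eq (hG z hz)]
    exact (hFderiv z hz).deriv
  rw [setIntegral_congr_fun measurableSet_Ioo hcongr]
  have hcont : ContinuousOn h (Set.Icc c d) := by
    apply ContinuousOn.add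
    · exact ((hf.continuousOn_derivWithin (uniqueDiffOn_Icc (by norm_num)) le_rfl).mono hsub).mul
        (continuous_const.mul (Real.continuous_exp.comp (continuous_id.div_const a))).continuousOn
    · exact ((hf.continuousOn).mono hsub).mul
        ((continuous_const.mul (Real.continuous_exp.comp (continuous_id.div_const a))).mul continuous_const).continuousOn
  have hint : IntervalIntegrable h volume c d := by
    apply ContinuousOn.intervalIntegrable
    rwa [Set.uIcc_of_le hcd.le]
  have hFcont : ContinuousOn F (Set.Icc c d) :=
    ((hf.continuousOn).mono hsub).mul (continuous_const.mul (Real.continuous_exp.comp (continuous_id.div_const a))).continuousOn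
  have := intervalIntegral.integral_eq_sub_of_hasDeriv_right_of_le hcd.le hFcont
    (fun z hz => (hFderiv z hz).hasDerivWithinAt) hint
  rw [intervalIntegral.integral_of_le hcd.le, integral_Ioc_eq_integral_Ioo] at this
  rw [this]

lemma exp_cosh_identity (u v : ℝ) :
    Real.exp u * Real.cosh v - Real.exp (-v) * Real.cosh u = Real.sinh (u + v) := by
  simp [Real.cosh_eq, Real.sinh_eq, Real.exp_add, Real.exp_neg]; field_simp; ring

theorem compact_interval_integration_step
    (a : ℝ) (ha : 0 < a)
    (f : ℝ → ℝ) (hf : ContDiffOn ℝ 1 f (Set.Icc (-1) 1))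
    (k : ℝ → ℝ → ℝ)
    (hk : k = fun z x => Real.cosh ((1 + min z x) / a) * Real.cosh ((1 - max z x) / a) /
      (a * Real.sinh (2 / a)))
    (r : ℝ → ℝ → ℝ)
    (hr : r = fun z x => 1 + Real.sign (x - z) * Real.tanh ((1 + Real.sign (x - z) * z) / a))
    (κ : ℝ → ℝ → ℝ) (hκ : κ = fun z x => r z x * k z x)
    (B : ℝ → ℝ) (hB : B = fun x => Real.cosh ((1 + x) / a) / Real.sinh (2 / a))
    (x : ℝ) (hx : x ∈ Set.Ioo (-1 : ℝ) 1) :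
    (∫ z in Set.Ioo (-1 : ℝ) x, deriv (fun z' => f z' * κ z' x) z) +
      (∫ z in Set.Ioo x (1 : ℝ), deriv (fun z' => f z' * κ z' x) z) =
      (1 / a) * (B x * f 1 + f x - B (-x) * f (-1)) := by
  obtain ⟨hx1, hx2⟩ := hx
  set S := Real.sinh (2 / a) with hS
  have hSpos : 0 < S := Real.sinh_pos_iff.2 (by positivity)
  set C₁ : ℝ := Real.exp (1 / a) * (Real.cosh ((1 - x) / a) / (a * S)) with hC₁
  set C₂ : ℝ := Real.exp (-(1 / a)) * (Real.cosh ((1 + x) / a) / (a * S)) with hC₂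
  -- κ on the left of x
  have hκL : ∀ w, w < x → κ w x = C₁ * Real.exp (w / a) := by
    intro w hw
    rw [hκ, hr, hk]
    simp only
    rw [Real.sign_of_pos (by linarith : (0:ℝ) < x - w), min_eq_left hw.le, max_eq_right hw.le]
    have key : (1 + Real.tanh ((1 + w) / a)) * Real.cosh ((1 + w) / a)
        = Real.exp ((1 + w) / a) := by
      rw [Real.tanh_eq_sinh_div_cosh]
      field_simp [(Real.cosh_pos ((1 + w) / a)).ne']
      exact Real.cosh_add_sinh _
    rw [one_mul, one_mul]
    field_simp [hC₁]
    rw [show (1 + Real.tanh ((1 + w) / a)) * Real.cosh ((1 + w) / a) * Real.cosh ((1 - x) / a)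
        = ((1 + Real.tanh ((1 + w) / a)) * Real.cosh ((1 + w) / a)) * Real.cosh ((1 - x) / a)
        from by ring, key,
      show (1 + w) / a = 1 / a + w / a from by ring, Real.exp_add]
    rw [hC₁]; field_simp
  -- κ on the right of x
  have hκR : ∀ w, x < w → κ w x = C₂ * Real.exp (w / a) := by
    intro w hw
    rw [hκ, hr, hk]
    simp only
    rw [Real.sign_of_neg (by linarith : x - w < 0), min_eq_right hw.le, max_eq_left hw.le]
    have key : (1 - Real.tanh ((1 - w) / a)) * Real.cosh ((1 - w) / a)
        = Real.exp (-((1 - w) / a)) := by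
      rw [Real.tanh_eq_sinh_div_cosh]
      field_simp [(Real.cosh_pos ((1 - w) / a)).ne']
      exact Real.cosh_sub_sinh _
    rw [show (1 : ℝ) + -1 * w = 1 - w from by ring]
    field_simp [hC₂]
    rw [show (1 + -Real.tanh ((1 - w) / a)) * Real.cosh ((1 + x) / a) * Real.cosh ((1 - w) / a)
        = ((1 - Real.tanh ((1 - w) / a)) * Real.cosh ((1 - w) / a)) * Real.cosh ((1 + x) / a)
        from by ring, key,
      show -((1 - w) / a) = -1 / a + w / a from by ring, Real.exp_add]
    rw [hC₂, show (-1 : ℝ) / a = -(1 / a) from by ring]; field_simp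
  have hL := ftc_piece a ha f hf (-1) x le_rfl hx1 hx2.le C₁
    (fun z' => f z' * κ z' x)
    (by
      intro z hz
      exact Filter.eventuallyEq_of_mem (Iio_mem_nhds hz.2)
        (fun w hw => by rw [hκL w hw]))
  have hR := ftc_piece a ha f hf x 1 hx1.le hx2 le_rfl C₂
    (fun z' => f z' * κ z' x)
    (by
      intro z hz
      exact Filter.eventuallyEq_of_mem (Ioi_mem_nhds hz.1)
        (fun w hw => by rw [hκR w hw]))
  rw [hL, hR, hB]
  simp only
  have e1 : C₁ * Real.exp ((-1 : ℝ) / a) = Real.cosh ((1 - x) / a) / (a * S) := by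
    rw [hC₁, mul_comm (Real.exp (1/a)), mul_assoc, ← Real.exp_add,
      show (1:ℝ)/a + -1/a = 0 from by ring, Real.exp_zero, mul_one]
  have e2 : C₂ * Real.exp (1 / a) = Real.cosh ((1 + x) / a) / (a * S) := by
    rw [hC₂, mul_comm (Real.exp (-(1/a))), mul_assoc, ← Real.exp_add,
      show -((1:ℝ)/a) + 1/a = 0 from by ring, Real.exp_zero, mul_one]
  have e3 : C₁ * Real.exp (x / a) - C₂ * Real.exp (x / a) = 1 / a := by
    have h1 : Real.exp (1 / a) * Real.exp (x / a) = Real.exp ((1 + x) / a) := by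
      rw [← Real.exp_add, show (1:ℝ)/a + x/a = (1+x)/a from by ring]
    have h2 : Real.exp (-(1 / a)) * Real.exp (x / a) = Real.exp (-((1 - x) / a)) := by
      rw [← Real.exp_add, show -((1:ℝ)/a) + x/a = -((1-x)/a) from by ring]
    have hid := exp_cosh_identity ((1 + x) / a) ((1 - x) / a)
    rw [show (1 + x) / a + (1 - x) / a = 2 / a from by ring, ← hS] at hid
    rw [hC₁, hC₂]
    have : Real.exp (1 / a) * (Real.cosh ((1 - x) / a) / (a * S)) * Real.exp (x / a) -
        Real.exp (-(1 / a)) * (Real.cosh ((1 + x) / a) / (a * S)) * Real.exp (x / a)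
        = (Real.exp ((1 + x) / a) * Real.cosh ((1 - x) / a)
            - Real.exp (-((1 - x) / a)) * Real.cosh ((1 + x) / a)) / (a * S) := by
      rw [← h1, ← h2]; ring
    rw [this, hid]
    field_simp
  rw [show (1 : ℝ) + -x = 1 - x from by ring]
  linear_combination f x * e3 - f (-1) * e1 + f 1 * e2
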